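/- Let u be a global solution of the nonlinear obstacle problem on ℝ^d and suppose that u(x) − ½(x−x̄)·A(x−x̄) → 0 as |x| → ∞, where A ∈ S_d is positive semidefinite with F(A) = 1 and x̄ ∈ ℝ^d. Then u(x) = ½(x−x̄)·A(x−x̄) for all x ∈ ℝ^d. -/

import Mathlib

open MeasureTheory Metric Filter

attribute [local instance] Matrix.normedAddCommGroup Matrix.normedSpace

noncomputable def matOpNorm {d : ℕ} (M : Matrix (Fin d) (Fin d) ℝ) : ℝ :=
  ‖(Matrix.toEuclideanCLM (𝕜 := ℝ) M : EuclideanSpace ℝ (Fin d) →L[ℝ] EuclideanSpace ℝ (Fin d))‖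

def IsUniformlyElliptic {d : ℕ} (F : Matrix (Fin d) (Fin d) ℝ → ℝ) (Λ : ℝ) : Prop :=
  1 ≤ Λ ∧ ∀ M P : Matrix (Fin d) (Fin d) ℝ, M.IsSymm → P.IsSymm → P.PosSemidef →
    (1 / Λ) * matOpNorm P ≤ F (M + P) - F M ∧ F (M + P) - F M ≤ Λ * matOpNorm P

def IsGoodOperator {d : ℕ} (F : Matrix (Fin d) (Fin d) ℝ → ℝ) (Λ : ℝ) : Prop :=
  IsUniformlyElliptic F Λ ∧ ConvexOn ℝ {M | M.IsSymm} F ∧ ContDiffOn ℝ 1 F {M | M.IsSymm}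

/-- `u` solves the nonlinear obstacle problem for `F` on `Ω`. -/
def IsSolutionOn {d : ℕ} (F : Matrix (Fin d) (Fin d) ℝ → ℝ)
    (u : EuclideanSpace ℝ (Fin d) → ℝ) (Ω : Set (EuclideanSpace ℝ (Fin d))) : Prop :=
  ContDiffOn ℝ 1 u Ω ∧
  (∀ x ∈ Ω, ∃ (K : NNReal) (t : Set (EuclideanSpace ℝ (Fin d))),
    t ∈ nhdsWithin x Ω ∧ LipschitzOnWith K (gradient u) t) ∧
  (∀ x ∈ Ω, 0 ≤ u x) ∧
  ∃ H : EuclideanSpace ℝ (Fin d) → Matrix (Fin d) (Fin d) ℝ,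
    ∀ᵐ x ∂(volume : Measure (EuclideanSpace ℝ (Fin d))), x ∈ Ω →
      (H x).IsSymm ∧
      HasFDerivAt (gradient u)
        (Matrix.toEuclideanCLM (𝕜 := ℝ) (H x) :
          EuclideanSpace ℝ (Fin d) →L[ℝ] EuclideanSpace ℝ (Fin d)) x ∧
      F (H x) ≤ 1 ∧ (0 < u x → F (H x) = 1)

def contactSet {d : ℕ} (u : EuclideanSpace ℝ (Fin d) → ℝ) : Set (EuclideanSpace ℝ (Fin d)) :=
  {x | u x = 0}

def MemGc {d : ℕ} (F : Matrix (Fin d) (Fin d) ℝ → ℝ)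
    (u : EuclideanSpace ℝ (Fin d) → ℝ) : Prop :=
  IsSolutionOn F u Set.univ ∧ (contactSet u).Nonempty ∧ IsCompact (contactSet u)

noncomputable def quadPoly {d : ℕ} (A : Matrix (Fin d) (Fin d) ℝ)
    (x₀ : EuclideanSpace ℝ (Fin d)) (a : ℝ) (x : EuclideanSpace ℝ (Fin d)) : ℝ :=
  (1/2) * (inner ℝ (x - x₀) (Matrix.toEuclideanCLM (𝕜 := ℝ) A (x - x₀)) : ℝ) + a

def MemPc {d : ℕ} (F : Matrix (Fin d) (Fin d) ℝ → ℝ)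
    (Q : EuclideanSpace ℝ (Fin d) → ℝ) : Prop :=
  ∃ (A : Matrix (Fin d) (Fin d) ℝ) (x₀ : EuclideanSpace ℝ (Fin d)) (a : ℝ),
    A.IsSymm ∧ A.PosDef ∧ F A = 1 ∧ a ≤ 0 ∧ Q = quadPoly A x₀ a

/-- `f x = O(|x|^{2-d})` as `|x| → ∞`. -/
def DecaysAtInfinity (d : ℕ) (f : EuclideanSpace ℝ (Fin d) → ℝ) : Prop :=
  ∃ C R : ℝ, 0 < C ∧ 0 < R ∧ ∀ x : EuclideanSpace ℝ (Fin d),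
    R ≤ ‖x‖ → |f x| ≤ C * ‖x‖ ^ ((2 : ℝ) - d)

/-! ### Auxiliary lemmas -/

open Set
open scoped ENNReal NNReal RealInnerProductSpace

namespace Statement16Aux

variable {d : ℕ}

local notation "E" => EuclideanSpace ℝ (Fin d)
local notation "toCLM" => Matrix.toEuclideanCLM (𝕜 := ℝ) (n := Fin d)

/-- Lipschitz-on-a-set images of null sets are null. -/
lemma lipschitzOnWith_image_null {K : ℝ≥0} {f : E → E} {s : Set E}
    (hf : LipschitzOnWith K f s) (hs : volume s = 0) : volume (f '' s) = 0 := by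
  classical
  set c : ℝ≥0 := (Fintype.card (Fin d) : ℝ≥0) ^ ((1:ℝ≥0∞)/2).toReal with hc
  have hlip1 : LipschitzWith 1 (⇑(WithLp.equiv 2 (Fin d → ℝ))) := PiLp.lipschitzWith_ofLp 2 _
  have hlip2 : LipschitzWith c (⇑(WithLp.equiv 2 (Fin d → ℝ)).symm) :=
    (PiLp.antilipschitzWith_ofLp 2 (fun _ : Fin d => ℝ)).to_rightInverse
      (WithLp.equiv 2 (Fin d → ℝ)).right_inv
  set e := WithLp.equiv 2 (Fin d → ℝ)
  set f' : (Fin d → ℝ) → (Fin d → ℝ) := ⇑e ∘ f ∘ ⇑e.symm with hf'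
  set s' : Set (Fin d → ℝ) := ⇑e '' s with hs'
  have hmaps : Set.MapsTo (⇑e.symm) s' s := by
    rintro x ⟨y, hy, rfl⟩; simpa using hy
  have hlipf' : LipschitzOnWith (1 * (K * c)) f' s' :=
    hlip1.comp_lipschitzOnWith (hf.comp hlip2.lipschitzOnWith hmaps)
  have hmp : MeasurePreserving (⇑((MeasurableEquiv.toLp 2 (Fin d → ℝ)).symm)) volume volume :=
    EuclideanSpace.volume_preserving_symm_measurableEquiv_toLp (Fin d)
  have hcoe : ⇑((MeasurableEquiv.toLp 2 (Fin d → ℝ)).symm) = ⇑e :=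
    rfl
  have himg_null : ∀ t : Set E, volume t = 0 → volume (⇑e '' t) = 0 := by
    intro t ht
    have h4 : ⇑e '' t = ⇑((MeasurableEquiv.toLp 2 (Fin d → ℝ)).symm).symm ⁻¹' t := by
      rw [← hcoe, MeasurableEquiv.image_eq_preimage_symm]
    rw [h4]
    exact (hmp.symm _).quasiMeasurePreserving.preimage_null ht
  have hs'0 : volume s' = 0 := himg_null s hs
  have hH : (μH[(d:ℝ)] : Measure (Fin d → ℝ)) = volume := by
    simpa using (MeasureTheory.hausdorffMeasure_pi_real (ι := Fin d))
  have him : volume (f' '' s') = 0 := by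
    have h1 := hlipf'.hausdorffMeasure_image_le (d := (d:ℝ)) (Nat.cast_nonneg d)
    rw [hH] at h1
    refine le_antisymm (h1.trans ?_) zero_le
    rw [hs'0, mul_zero]
  have himage : ⇑e '' (f '' s) = f' '' s' := by
    rw [hf', hs', Set.image_comp, Set.image_comp]
    simp [Set.image_image]
  by_contra hne
  have h2 : volume (⇑e '' (f '' s)) = 0 := by rw [himage]; exact him
  have h3 : f '' s = ⇑((MeasurableEquiv.toLp 2 (Fin d → ℝ)).symm) ⁻¹' (⇑e '' (f '' s)) := by
    rw [← hcoe]; ext x; simp [hcoe]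
  apply hne
  rw [h3]
  exact hmp.quasiMeasurePreserving.preimage_null h2

lemma det_zero_clm (hd : 0 < d) : (0 : E →L[ℝ] E).det = 0 := by
  haveI : Nonempty (Fin d) := ⟨⟨0, hd⟩⟩
  have h0 : ((0 : E →L[ℝ] E) : E →ₗ[ℝ] E) = 0 := rfl
  rw [ContinuousLinearMap.det, h0]
  exact LinearMap.det_zero' (EuclideanSpace.basisFun (Fin d) ℝ).toBasis

lemma image_zero_fderiv_null (hd : 0 < d) {g : E → E} {s : Set E}
    (h : ∀ x ∈ s, HasFDerivWithinAt g (0 : E →L[ℝ] E) s x) : volume (g '' s) = 0 :=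
  addHaar_image_eq_zero_of_det_fderivWithin_eq_zero volume h (fun _ _ => det_zero_clm hd)

lemma locallyLipschitz_image_null {g : E → E}
    (hg : ∀ x : E, ∃ (K : ℝ≥0) (t : Set E), t ∈ nhds x ∧ LipschitzOnWith K g t)
    {N : Set E} (hN : volume N = 0) : volume (g '' N) = 0 := by
  choose K t ht hlip using hg
  obtain ⟨s, hsc, hsU⟩ := TopologicalSpace.countable_cover_nhds ht
  have hcov : N = ⋃ x ∈ s, N ∩ t x := by
    ext z; simp only [Set.mem_iUnion, Set.mem_inter_iff]
    constructor
    · intro hz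
      have h5 : z ∈ ⋃ x ∈ s, t x := hsU ▸ Set.mem_univ z
      simp only [Set.mem_iUnion] at h5
      obtain ⟨x, hx, hzt⟩ := h5
      exact ⟨x, hx, hz, hzt⟩
    · rintro ⟨x, hx, hz, -⟩; exact hz
  rw [hcov, Set.image_iUnion₂]
  refine (measure_biUnion_null_iff hsc).mpr (fun x hx => ?_)
  exact lipschitzOnWith_image_null ((hlip x).mono Set.inter_subset_right)
    (measure_mono_null Set.inter_subset_left hN)

lemma toCLM_self_adjoint {A : Matrix (Fin d) (Fin d) ℝ} (hA : A.IsSymm) (x y : E) :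
    ⟪toCLM A x, y⟫ = ⟪x, toCLM A y⟫ := by
  have hstar : star (toCLM A) = toCLM A := by
    rw [← map_star, Matrix.star_eq_conjTranspose]
    congr 1
  have h6 := ContinuousLinearMap.adjoint_inner_left (toCLM A) y x
  rw [← ContinuousLinearMap.star_eq_adjoint, hstar] at h6
  exact h6

lemma inner_toCLM_apply (A : Matrix (Fin d) (Fin d) ℝ) (v : E) :
    ⟪toCLM A v, v⟫ = dotProduct (star (WithLp.equiv 2 (Fin d → ℝ) v))
      (A.mulVec (WithLp.equiv 2 (Fin d → ℝ) v)) := by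
  rw [PiLp.inner_apply]
  rw [dotProduct]
  congr 1

lemma posSemidef_of_inner {S : Matrix (Fin d) (Fin d) ℝ} (hS : S.IsSymm)
    (h : ∀ v : E, 0 ≤ ⟪toCLM S v, v⟫) : S.PosSemidef := by
  rw [Matrix.posSemidef_iff_dotProduct_mulVec]
  constructor
  · exact hS
  · intro x
    have h8 := h ((WithLp.equiv 2 (Fin d → ℝ)).symm x)
    rwa [inner_toCLM_apply, Equiv.apply_symm_apply] at h8

lemma inner_nonneg_of_posSemidef {A : Matrix (Fin d) (Fin d) ℝ} (hA : A.PosSemidef) (v : E) :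
    0 ≤ ⟪toCLM A v, v⟫ := by
  rw [inner_toCLM_apply]
  exact hA.dotProduct_mulVec_nonneg _

/-- Second-order necessary condition at a local max. -/
lemma second_order_max {φ : E → ℝ} {gφ : E → E} {L : (E) →L[ℝ] (E)} {x : E}
    (hg : ∀ y, HasFDerivAt φ (innerSL ℝ (gφ y)) y)
    (hL : HasFDerivAt gφ L x)
    (hmax : IsLocalMax φ x) (v : E) : ⟪L v, v⟫ ≤ 0 := by
  by_contra hpos
  push_neg at hpos
  set c : ℝ := ⟪L v, v⟫ with hc
  have hg0 : gφ x = 0 := by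
    have h1 : fderiv ℝ φ x = innerSL ℝ (gφ x) := (hg x).fderiv
    have h2 := hmax.fderiv_eq_zero
    rw [h1] at h2
    have h3 := congrFun (congrArg (fun (T : (E) →L[ℝ] ℝ) => (T : (E) → ℝ)) h2) (gφ x)
    simp only [innerSL_apply_apply, ContinuousLinearMap.zero_apply] at h3
    exact inner_self_eq_zero.mp h3
  have hline : ∀ s : ℝ, HasDerivAt (fun s : ℝ => x + s • v) v s := by
    intro s
    simpa using ((hasDerivAt_id s).smul_const v).const_add x
  set ψ : ℝ → ℝ := fun s => ⟪gφ (x + s • v), v⟫ with hψ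
  have hψ0 : ψ 0 = 0 := by simp [hψ, hg0]
  have hψd : HasDerivAt ψ c 0 := by
    have hcomp : HasDerivAt (fun s : ℝ => gφ (x + s • v)) (L v) 0 := by
      have hL' : HasFDerivAt gφ L (x + (0:ℝ) • v) := by simpa using hL
      have := hL'.comp_hasDerivAt 0 (hline 0)
      simpa [Function.comp_def] using this
    have := hcomp.inner ℝ (hasDerivAt_const (0:ℝ) v)
    simpa [hg0, hc] using this
  have hηd : ∀ s : ℝ, HasDerivAt (fun s : ℝ => φ (x + s • v)) (ψ s) s := by
    intro s
    have := (hg (x + s • v)).comp_hasDerivAt s (hline s)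
    simpa [hψ, Function.comp_def] using this
  have hslope : Tendsto (slope ψ 0) (nhdsWithin 0 {(0:ℝ)}ᶜ) (nhds c) :=
    hasDerivAt_iff_tendsto_slope.mp hψd
  have hev : ∀ᶠ s in nhdsWithin 0 {(0:ℝ)}ᶜ, 0 < slope ψ 0 s :=
    hslope.eventually (eventually_gt_nhds hpos)
  have hev2 : ∀ᶠ s in nhdsWithin (0:ℝ) (Set.Ioi 0), 0 < slope ψ 0 s :=
    hev.filter_mono (nhdsWithin_mono 0 (fun s hs => ne_of_gt hs))
  obtain ⟨t1, ht1, ht1p⟩ := (nhdsGT_basis (0:ℝ)).eventually_iff.mp hev2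
  have hcont : ContinuousAt (fun s : ℝ => x + s • v) 0 := ((hline 0).continuousAt)
  have hev3 : ∀ᶠ s : ℝ in nhds 0, φ (x + s • v) ≤ φ x := by
    have h9 : Tendsto (fun s : ℝ => x + s • v) (nhds 0) (nhds x) := by
      simpa using hcont.tendsto
    exact h9.eventually hmax
  obtain ⟨ε, hε, hεp⟩ := Metric.eventually_nhds_iff.mp hev3
  set t : ℝ := min (t1/2) (ε/2) with htdef
  have htpos : 0 < t := lt_min (by linarith) (by linarith)
  have hmono : StrictMonoOn (fun s : ℝ => φ (x + s • v)) (Set.Icc 0 t) := by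
    apply strictMonoOn_of_deriv_pos (convex_Icc 0 t)
    · exact Continuous.continuousOn
        (continuous_iff_continuousAt.mpr (fun s => ((hηd s).continuousAt)))
    · intro s hs
      rw [interior_Icc] at hs
      rw [(hηd s).deriv]
      have hst1 : s ∈ Set.Ioo 0 t1 :=
        ⟨hs.1, lt_of_lt_of_le hs.2 ((min_le_left _ _).trans (by linarith))⟩
      have h10 := ht1p ⟨hst1.1, hst1.2⟩
      have hss : slope ψ 0 s = ψ s / s := by
        simp [slope_def_field, hψ0]
      rw [hss] at h10
      have h11 := mul_pos h10 hst1.1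
      rwa [div_mul_cancel₀] at h11
      exact ne_of_gt hst1.1
  have hlt : φ (x + (0:ℝ) • v) < φ (x + t • v) :=
    hmono (Set.left_mem_Icc.mpr (le_of_lt htpos)) (Set.right_mem_Icc.mpr (le_of_lt htpos)) htpos
  have hle : φ (x + t • v) ≤ φ x := by
    apply hεp
    simp only [Real.dist_eq, sub_zero]
    rw [abs_of_pos htpos]
    exact lt_of_le_of_lt (min_le_right _ _) (by linarith)
  simp only [zero_smul, add_zero] at hlt
  linarith

/-- Geometric lemma: localized maxima of tilted functions. -/
lemma exists_good_max {v : E → ℝ} {y : E} (hv : Continuous v) (hy : 0 < v y)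
    (hlim : Tendsto v (cocompact _) (nhds 0)) :
    ∃ δ : ℝ, 0 < δ ∧ ∀ p : E, ‖p‖ ≤ δ →
      ∃ xp : E, IsLocalMax (fun z => v z - ⟪p, z⟫) xp ∧ 0 < v xp := by
  have hε : (0:ℝ) < v y / 2 := by linarith
  have hco : ∀ᶠ x in cocompact E, |v x| < v y / 2 := by
    have h := hlim (Metric.ball_mem_nhds (0:ℝ) hε)
    rw [mem_map] at h
    filter_upwards [h] with x hx
    simpa [Real.dist_eq] using hx
  obtain ⟨C, hCcomp, hCsub⟩ := mem_cocompact.mp hco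
  obtain ⟨R₀, hR₀⟩ := hCcomp.isBounded.subset_closedBall 0
  set R : ℝ := max R₀ ‖y‖ + 1 with hR
  have hRpos : 0 < R := by
    have : (0:ℝ) ≤ max R₀ ‖y‖ := le_max_of_le_right (norm_nonneg y)
    linarith
  set K : Set E := closedBall 0 R with hK
  have hKcomp : IsCompact K := isCompact_closedBall 0 R
  have hyK : y ∈ K := by
    simp only [hK, mem_closedBall, dist_zero_right]
    have : ‖y‖ ≤ max R₀ ‖y‖ := le_max_right _ _
    linarith
  obtain ⟨x₀, hx₀K, hx₀max⟩ := hKcomp.exists_isMaxOn ⟨y, hyK⟩ hv.continuousOn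
  set m : ℝ := v x₀ with hm
  have hmy : v y ≤ m := hx₀max hyK
  have hmpos : 0 < m := lt_of_lt_of_le hy hmy
  refine ⟨m / (8 * (R + 1)), by positivity, fun p hp => ?_⟩
  set φ : E → ℝ := fun z => v z - ⟪p, z⟫ with hφ
  have hφc : Continuous φ := hv.sub ((innerSL ℝ p).continuous)
  obtain ⟨xp, hxpK, hxpmax⟩ := hKcomp.exists_isMaxOn ⟨y, hyK⟩ hφc.continuousOn
  have hinner : ∀ z ∈ K, |⟪p, z⟫| ≤ m / (8 * (R + 1)) * R := by
    intro z hz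
    calc |⟪p, z⟫| ≤ ‖p‖ * ‖z‖ := abs_real_inner_le_norm p z
    _ ≤ m / (8 * (R + 1)) * R := by
        apply mul_le_mul hp ?_ (norm_nonneg z) (by positivity)
        simpa [hK, dist_zero_right] using hz
  have hbound : m / (8 * (R + 1)) * R ≤ m / 8 := by
    rw [div_mul_eq_mul_div, div_le_div_iff₀ (by positivity) (by norm_num)]
    nlinarith [hmpos.le, hRpos.le]
  have hφxp : m - m/8 ≤ φ xp := by
    have h1 : φ x₀ ≤ φ xp := hxpmax hx₀K
    have h2 := hinner x₀ hx₀K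
    have := abs_le.mp (h2.trans hbound)
    simp only [hφ] at h1 ⊢
    linarith [this.2]
  have hvxp : 0 < v xp := by
    have h2 := hinner xp hxpK
    have := abs_le.mp (h2.trans hbound)
    have : φ xp ≤ v xp + m/8 := by simp only [hφ]; linarith [this.1]
    linarith
  have hxpC : xp ∈ C := by
    by_contra hxpC
    have h3 : |v xp| < v y / 2 := hCsub hxpC
    have h4 : φ xp ≤ v xp + m/8 := by
      have h2 := hinner xp hxpK
      have := abs_le.mp (h2.trans hbound)
      simp only [hφ]; linarith [this.1]
    have h5 : v xp < m / 2 := lt_of_lt_of_le (lt_of_abs_lt h3) (by linarith)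
    linarith
  have hxpball : xp ∈ Metric.ball (0:E) R := by
    have h6 : xp ∈ closedBall 0 R₀ := hR₀ hxpC
    simp only [mem_closedBall, dist_zero_right] at h6
    simp only [Metric.mem_ball, dist_zero_right]
    have : R₀ ≤ max R₀ ‖y‖ := le_max_left _ _
    linarith
  refine ⟨xp, hxpmax.isLocalMax ?_, hvxp⟩
  exact mem_nhds_iff.mpr ⟨Metric.ball 0 R, ball_subset_closedBall, isOpen_ball, hxpball⟩

lemma hasFDerivAt_quadPoly {A : Matrix (Fin d) (Fin d) ℝ} (hA : A.IsSymm)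
    (x₀ : E) (x : E) :
    HasFDerivAt (quadPoly A x₀ 0) (innerSL ℝ (toCLM A (x - x₀))) x := by
  have hf : HasFDerivAt (fun z : E => z - x₀) (ContinuousLinearMap.id ℝ (E)) x :=
    (hasFDerivAt_id x).sub_const x₀
  have hgd : HasFDerivAt (fun z : E => toCLM A (z - x₀))
      ((toCLM A).comp (ContinuousLinearMap.id ℝ (E))) x := ((toCLM A).hasFDerivAt).comp x hf
  have hinner := hf.inner ℝ hgd
  have hin2 := (hinner.const_mul (1/2 : ℝ)).add_const 0
  have heq : ((1/2 : ℝ) • ((fderivInnerCLM ℝ (x - x₀, toCLM A (x - x₀))).comp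
      ((ContinuousLinearMap.id ℝ (E)).prod ((toCLM A).comp (ContinuousLinearMap.id ℝ (E))))))
      = innerSL ℝ (toCLM A (x - x₀)) := by
    ext v
    simp only [ContinuousLinearMap.smul_apply, ContinuousLinearMap.comp_apply,
      ContinuousLinearMap.prod_apply, ContinuousLinearMap.id_apply, fderivInnerCLM_apply,
      innerSL_apply_apply, smul_eq_mul]
    have h1 : ⟪x - x₀, toCLM A v⟫ = ⟪toCLM A (x - x₀), v⟫ :=
      (toCLM_self_adjoint hA (x - x₀) v).symm
    have h2 : ⟪v, toCLM A (x - x₀)⟫ = ⟪toCLM A (x - x₀), v⟫ := real_inner_comm _ _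
    rw [h1, h2]
    ring
  rw [← heq]
  exact hin2

end Statement16Aux

open Statement16Aux in
set_option maxHeartbeats 1000000 in
/-- A global solution asymptotic to `½(x-x̄)·A(x-x̄)` equals that polynomial. -/
theorem statement16 (d : ℕ) (hd : 3 ≤ d) (Λ : ℝ)
    (F : Matrix (Fin d) (Fin d) ℝ → ℝ) (hF : IsGoodOperator F Λ)
    (u : EuclideanSpace ℝ (Fin d) → ℝ) (hu : IsSolutionOn F u Set.univ)
    (A : Matrix (Fin d) (Fin d) ℝ) (xBar : EuclideanSpace ℝ (Fin d))
    (hAs : A.IsSymm) (hApsd : A.PosSemidef) (hFA : F A = 1)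
    (hlim : Tendsto (fun x => u x - quadPoly A xBar 0 x)
      (Filter.cocompact (EuclideanSpace ℝ (Fin d))) (nhds 0)) :
    ∀ x : EuclideanSpace ℝ (Fin d), u x = quadPoly A xBar 0 x := by
  classical
  have hd0 : 0 < d := by omega
  obtain ⟨⟨hΛ, helli⟩, hconv, hFc⟩ := hF
  obtain ⟨hC1, hLip, hnonneg, H, hae⟩ := hu
  set T : EuclideanSpace ℝ (Fin d) →L[ℝ] EuclideanSpace ℝ (Fin d) :=
    Matrix.toEuclideanCLM (𝕜 := ℝ) A with hT
  set Q : EuclideanSpace ℝ (Fin d) → ℝ := quadPoly A xBar 0 with hQ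
  set w : EuclideanSpace ℝ (Fin d) → ℝ := fun z => u z - Q z with hw
  have hΛ0 : (0:ℝ) < 1 / Λ := by positivity
  -- gradient facts
  have hudiff : ∀ y, DifferentiableAt ℝ u y :=
    fun y => ((contDiffOn_univ.mp hC1).differentiable one_ne_zero) y
  have hugrad : ∀ y, HasFDerivAt u (innerSL ℝ (gradient u y)) y := by
    intro y
    have h := (hudiff y).hasGradientAt
    rw [hasGradientAt_iff_hasFDerivAt] at h
    have heq : (InnerProductSpace.toDual ℝ _) (gradient u y) = innerSL ℝ (gradient u y) := by
      ext v; simp [InnerProductSpace.toDual_apply_apply]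
    rwa [heq] at h
  have hQd : ∀ y, HasFDerivAt Q (innerSL ℝ (T (y - xBar))) y :=
    fun y => hasFDerivAt_quadPoly hAs xBar y
  have hQnonneg : ∀ z, 0 ≤ Q z := by
    intro z
    have h := inner_nonneg_of_posSemidef hApsd (z - xBar)
    rw [real_inner_comm] at h
    simp only [hQ, quadPoly, add_zero]
    positivity
  set g : EuclideanSpace ℝ (Fin d) → EuclideanSpace ℝ (Fin d) :=
    fun y => gradient u y - T (y - xBar) with hg
  have hφd : ∀ (p : EuclideanSpace ℝ (Fin d)) y,
      HasFDerivAt (fun z => w z - ⟪p, z⟫) (innerSL ℝ (g y - p)) y := by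
    intro p y
    have h1 := ((hugrad y).sub (hQd y)).sub ((innerSL ℝ p).hasFDerivAt)
    have h2 : innerSL ℝ (g y - p)
        = innerSL ℝ (gradient u y) - innerSL ℝ (T (y - xBar)) - innerSL ℝ p := by
      simp only [hg, map_sub]
    rw [h2]
    exact h1
  have hFermat : ∀ (p x : EuclideanSpace ℝ (Fin d)),
      fderiv ℝ (fun z => w z - ⟪p, z⟫) x = 0 → g x = p := by
    intro p x hf0
    have h := (hφd p x).fderiv
    rw [hf0] at h
    have h2 := congrFun (congrArg (fun (T' : EuclideanSpace ℝ (Fin d) →L[ℝ] ℝ) =>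
      (T' : EuclideanSpace ℝ (Fin d) → ℝ)) h.symm) (g x - p)
    simp only [innerSL_apply_apply, ContinuousLinearMap.zero_apply] at h2
    have := inner_self_eq_zero.mp h2
    rwa [sub_eq_zero] at this
  -- the per-point analysis at good extremal points
  have hpoint : ∀ (p x : EuclideanSpace ℝ (Fin d)),
      ((H x).IsSymm ∧ HasFDerivAt (gradient u)
        (Matrix.toEuclideanCLM (𝕜 := ℝ) (H x)) x ∧ F (H x) ≤ 1 ∧ (0 < u x → F (H x) = 1)) →
      ((IsLocalMax (fun z => w z - ⟪p, z⟫) x ∧ 0 < w x) ∨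
        IsLocalMin (fun z => w z - ⟪p, z⟫) x) →
      DifferentiableAt ℝ g x ∧ fderiv ℝ g x = 0 := by
    intro p x hgood hcase
    obtain ⟨hsym, hder, hFle, hFeq⟩ := hgood
    have hLd : HasFDerivAt g (Matrix.toEuclideanCLM (𝕜 := ℝ) (H x) - T) x := by
      have haff : HasFDerivAt (fun y : EuclideanSpace ℝ (Fin d) => T (y - xBar))
          (T.comp (ContinuousLinearMap.id ℝ _)) x :=
        (T.hasFDerivAt).comp x ((hasFDerivAt_id x).sub_const xBar)
      rw [ContinuousLinearMap.comp_id] at haff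
      exact hder.sub haff
    have hgφd : HasFDerivAt (fun y => g y - p) (Matrix.toEuclideanCLM (𝕜 := ℝ) (H x) - T) x :=
      hLd.sub_const p
    -- second-order information
    have hL0 : Matrix.toEuclideanCLM (𝕜 := ℝ) (H x) - T = 0 := by
      rcases hcase with ⟨hmax, hwx⟩ | hmin
      · -- max case : A - H x is PSD and F (H x) = 1
        have hquad : ∀ v, ⟪(Matrix.toEuclideanCLM (𝕜 := ℝ) (H x) - T) v, v⟫ ≤ 0 := by
          intro v
          exact second_order_max (fun y => hφd p y) hgφd hmax v
        set P : Matrix (Fin d) (Fin d) ℝ := A - H x with hP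
        have hPsym : P.IsSymm := by
          show P.transpose = P
          rw [hP, Matrix.transpose_sub, hAs, hsym]
        have hPclm : Matrix.toEuclideanCLM (𝕜 := ℝ) P
            = -(Matrix.toEuclideanCLM (𝕜 := ℝ) (H x) - T) := by
          simp only [hP, map_sub, hT]
          abel
        have hPpsd : P.PosSemidef := by
          apply posSemidef_of_inner hPsym
          intro v
          rw [hPclm]
          simp only [ContinuousLinearMap.neg_apply, inner_neg_left]
          linarith [hquad v]
        have hux : 0 < u x := by
          have := hQnonneg x
          have hwux : u x = w x + Q x := by simp [hw]
          linarith
        have helli1 := (helli (H x) P hsym hPsym hPpsd).1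
        have hHP : H x + P = A := by rw [hP]; abel
        rw [hHP, hFA, hFeq hux] at helli1
        have hnorm0 : matOpNorm P = 0 := by
          have hnn : 0 ≤ matOpNorm P := norm_nonneg _
          nlinarith
        have : Matrix.toEuclideanCLM (𝕜 := ℝ) P = 0 := by
          rw [← norm_eq_zero]; exact hnorm0
        rw [this] at hPclm
        exact neg_eq_zero.mp hPclm.symm
      · -- min case : H x - A is PSD
        have hquad : ∀ v, 0 ≤ ⟪(Matrix.toEuclideanCLM (𝕜 := ℝ) (H x) - T) v, v⟫ := by
          intro v
          have hneg : ∀ y, HasFDerivAt (fun z => -(w z - ⟪p, z⟫))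
              (innerSL ℝ (-(g y - p))) y := by
            intro y
            have := (hφd p y).neg
            rw [map_neg]; exact this
          have hmax' : IsLocalMax (fun z => -(w z - ⟪p, z⟫)) x := hmin.neg
          have hgφd' : HasFDerivAt (fun y => -(g y - p))
              (-(Matrix.toEuclideanCLM (𝕜 := ℝ) (H x) - T)) x := hgφd.neg
          have := second_order_max hneg hgφd' hmax' v
          simp only [ContinuousLinearMap.neg_apply, inner_neg_left] at this
          linarith
        set S : Matrix (Fin d) (Fin d) ℝ := H x - A with hS
        have hSsym : S.IsSymm := by
          show S.transpose = S
          rw [hS, Matrix.transpose_sub, hAs, hsym]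
        have hSclm : Matrix.toEuclideanCLM (𝕜 := ℝ) S
            = Matrix.toEuclideanCLM (𝕜 := ℝ) (H x) - T := by
          simp only [hS, map_sub, hT]
        have hSpsd : S.PosSemidef := by
          apply posSemidef_of_inner hSsym
          intro v
          rw [hSclm]
          exact hquad v
        have helli1 := (helli A S hAs hSsym hSpsd).1
        have hAS : A + S = H x := by rw [hS]; abel
        rw [hAS, hFA] at helli1
        have hnorm0 : matOpNorm S = 0 := by
          have hnn : 0 ≤ matOpNorm S := norm_nonneg _
          nlinarith
        have h0 : Matrix.toEuclideanCLM (𝕜 := ℝ) S = 0 := by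
          rw [← norm_eq_zero]; exact hnorm0
        rw [← hSclm, h0]
    have hLd' : HasFDerivAt g (0 : EuclideanSpace ℝ (Fin d) →L[ℝ] EuclideanSpace ℝ (Fin d)) x :=
      hL0 ▸ hLd
    exact ⟨hLd'.differentiableAt, hLd'.fderiv⟩
  -- measure-theoretic part
  set good : EuclideanSpace ℝ (Fin d) → Prop := fun x => (H x).IsSymm ∧
    HasFDerivAt (gradient u) (Matrix.toEuclideanCLM (𝕜 := ℝ) (H x)) x ∧
    F (H x) ≤ 1 ∧ (0 < u x → F (H x) = 1) with hgooddef
  set N : Set (EuclideanSpace ℝ (Fin d)) := {x | ¬ good x} with hNdef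
  have hN : volume N = 0 := by
    have hae2 : ∀ᵐ x ∂(volume : Measure (EuclideanSpace ℝ (Fin d))), good x := by
      filter_upwards [hae] with x hx
      exact hx (Set.mem_univ x)
    exact ae_iff.mp hae2
  set s0 : Set (EuclideanSpace ℝ (Fin d)) :=
    {x | DifferentiableAt ℝ g x ∧ fderiv ℝ g x = 0} with hs0def
  have hs0null : volume (g '' s0) = 0 := by
    apply image_zero_fderiv_null hd0
    intro x hx
    have h := hx.1.hasFDerivAt
    rw [hx.2] at h
    exact h.hasFDerivWithinAt
  have hNnull : volume (g '' N) = 0 := by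
    apply locallyLipschitz_image_null ?_ hN
    intro x
    obtain ⟨K, t, ht, hl⟩ := hLip x (Set.mem_univ x)
    rw [nhdsWithin_univ] at ht
    refine ⟨K + ‖T‖₊, t, ht, ?_⟩
    rw [lipschitzOnWith_iff_dist_le_mul]
    intro a ha b hb
    have h1 : dist (gradient u a) (gradient u b) ≤ K * dist a b :=
      (lipschitzOnWith_iff_dist_le_mul.mp hl) a ha b hb
    have h2 : dist (T (a - xBar)) (T (b - xBar)) ≤ ‖T‖ * dist a b := by
      have h3 := T.lipschitz.dist_le_mul (a - xBar) (b - xBar)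
      rwa [dist_sub_right, coe_nnnorm] at h3
    calc dist (g a) (g b) ≤ dist (gradient u a) (gradient u b)
        + dist (T (a - xBar)) (T (b - xBar)) := dist_sub_sub_le _ _ _ _
    _ ≤ (↑(K + ‖T‖₊)) * dist a b := by
        push_cast
        linarith
  have hcontra : ∀ δ : ℝ, 0 < δ →
      Metric.closedBall (0 : EuclideanSpace ℝ (Fin d)) δ ⊆ g '' s0 ∪ g '' N → False := by
    intro δ hδ hsub
    have h1 : volume (Metric.closedBall (0 : EuclideanSpace ℝ (Fin d)) δ) ≤ 0 := by
      calc volume (Metric.closedBall (0 : EuclideanSpace ℝ (Fin d)) δ)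
          ≤ volume (g '' s0 ∪ g '' N) := measure_mono hsub
      _ ≤ volume (g '' s0) + volume (g '' N) := measure_union_le _ _
      _ = 0 := by rw [hs0null, hNnull, add_zero]
    exact absurd (le_antisymm h1 zero_le)
      (ne_of_gt (measure_closedBall_pos volume (0 : EuclideanSpace ℝ (Fin d)) hδ))
  have hwc : Continuous w := by
    have hu_c : Continuous u := (contDiffOn_univ.mp hC1).continuous
    have hQ_c : Continuous Q := continuous_iff_continuousAt.mpr (fun y => (hQd y).continuousAt)
    exact hu_c.sub hQ_c
  have hle : ∀ y, w y ≤ 0 := by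
    by_contra hc
    push_neg at hc
    obtain ⟨y, hy⟩ := hc
    obtain ⟨δ, hδ, hmax⟩ := exists_good_max hwc hy hlim
    apply hcontra δ hδ
    intro p hp
    rw [Metric.mem_closedBall, dist_zero_right] at hp
    obtain ⟨xp, hxpmax, hxpw⟩ := hmax p hp
    by_cases hxpN : xp ∈ N
    · exact Or.inr ⟨xp, hxpN, hFermat p xp hxpmax.fderiv_eq_zero⟩
    · have hgood : good xp := not_not.mp hxpN
      obtain ⟨hdiff, hfz⟩ := hpoint p xp hgood (Or.inl ⟨hxpmax, hxpw⟩)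
      exact Or.inl ⟨xp, ⟨hdiff, hfz⟩, hFermat p xp hxpmax.fderiv_eq_zero⟩
  have hge : ∀ y, 0 ≤ w y := by
    by_contra hc
    push_neg at hc
    obtain ⟨y, hy⟩ := hc
    have hylt : 0 < (fun z => -w z) y := by simpa using hy
    have hnlim : Tendsto (fun z => -w z) (cocompact (EuclideanSpace ℝ (Fin d))) (nhds 0) := by
      simpa using hlim.neg
    obtain ⟨δ, hδ, hmax⟩ := exists_good_max hwc.neg hylt hnlim
    apply hcontra δ hδ
    intro q hq
    rw [Metric.mem_closedBall, dist_zero_right] at hq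
    have hq' : ‖-q‖ ≤ δ := by rwa [norm_neg]
    obtain ⟨xp, hxpmax, _⟩ := hmax (-q) hq'
    have hxpmin : IsLocalMin (fun z => w z - ⟪q, z⟫) xp := by
      have h1 : IsLocalMin (fun z => -((fun z => -w z) z - ⟪-q, z⟫)) xp := hxpmax.neg
      have h2 : (fun z => -((fun z => -w z) z - ⟪-q, z⟫)) = (fun z => w z - ⟪q, z⟫) := by
        funext z
        rw [inner_neg_left]
        ring
      rwa [h2] at h1
    by_cases hxpN : xp ∈ N
    · exact Or.inr ⟨xp, hxpN, hFermat q xp hxpmin.fderiv_eq_zero⟩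
    · have hgood : good xp := not_not.mp hxpN
      obtain ⟨hdiff, hfz⟩ := hpoint q xp hgood (Or.inr hxpmin)
      exact Or.inl ⟨xp, ⟨hdiff, hfz⟩, hFermat q xp hxpmin.fderiv_eq_zero⟩
  intro x
  have h1 := hle x
  have h2 := hge x
  have h3 : w x = 0 := le_antisymm h1 h2
  have h4 : u x - Q x = 0 := h3
  simpa [hQ] using sub_eq_zero.mp h4
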